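/- For all 0 ≤ s < t, the symmetrized Kullback–Leibler (Jeffreys) divergence between consecutive tempering measures admits the upper bound D_{KL,2}(μ_s, μ_t) ≤ (t−s)·⟨Φ⟩_s. -/

import Mathlib

open MeasureTheory Real

/-- The tempering measure `μ_t`, defined by `dμ_t/dμ₀ = N_t⁻¹ exp (-t Φ)` where
`N_t = ∫ exp (-t Φ) dμ₀` is the normalizing constant. -/
noncomputable def temper {H : Type*} [MeasurableSpace H]
    (μ₀ : Measure H) (Φ : H → ℝ) (t : ℝ) : Measure H :=
  μ₀.withDensity fun u =>
    ENNReal.ofReal ((∫ v, Real.exp (-t * Φ v) ∂μ₀)⁻¹ * Real.exp (-t * Φ u))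

/-- The Kullback–Leibler divergence `D_KL(ν ‖ μ) = ∫ log (dν/dμ) dν` of two
(equivalent) probability measures. -/
noncomputable def klDivR {H : Type*} [MeasurableSpace H] (ν μ : Measure H) : ℝ :=
  ∫ u, Real.log ((ν.rnDeriv μ u).toReal) ∂ν

/-- The symmetrized Kullback–Leibler (Jeffreys) divergence
`D_{KL,2}(μ, ν) = D_KL(ν ‖ μ) + D_KL(μ ‖ ν)`. -/
noncomputable def klDiv2R {H : Type*} [MeasurableSpace H] (μ ν : Measure H) : ℝ :=
  klDivR ν μ + klDivR μ ν

section Aux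
variable {H : Type*} [MeasurableSpace H] (μ₀ : Measure H) [IsProbabilityMeasure μ₀]
  (Φ : H → ℝ)

lemma temper_eq_tilted (a : ℝ) :
    temper μ₀ Φ a = μ₀.tilted (fun u => -a * Φ u) := by
  simp only [temper, Measure.tilted, div_eq_inv_mul]

variable (hΦmeas : Measurable Φ) (hΦnonneg : ∀ u, 0 ≤ Φ u)

include hΦnonneg in
lemma exp_integrable {a : ℝ} (ha : 0 ≤ a) (hm : Measurable Φ) :
    Integrable (fun u => Real.exp (-a * Φ u)) μ₀ := by
  refine (integrable_const (1 : ℝ)).mono' ((hm.const_mul (-a)).exp).aestronglyMeasurable ?_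
  refine ae_of_all _ fun u => ?_
  rw [Real.norm_eq_abs, abs_of_pos (exp_pos _)]
  exact exp_le_one_iff.mpr (by nlinarith [hΦnonneg u])

include hΦnonneg in
lemma N_pos {a : ℝ} (ha : 0 ≤ a) (hm : Measurable Φ) :
    0 < ∫ v, Real.exp (-a * Φ v) ∂μ₀ :=
  integral_exp_pos (exp_integrable μ₀ Φ hΦnonneg ha hm)

include hΦmeas hΦnonneg in
lemma temper_prob {a : ℝ} (ha : 0 ≤ a) : IsProbabilityMeasure (temper μ₀ Φ a) := by
  rw [temper_eq_tilted]
  exact isProbabilityMeasure_tilted (exp_integrable μ₀ Φ hΦnonneg ha hΦmeas)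

include hΦmeas hΦnonneg in
lemma temper_integrable_Phi (hΦint : Integrable Φ μ₀) {a : ℝ} (ha : 0 ≤ a) :
    Integrable Φ (temper μ₀ Φ a) := by
  set N : ℝ := ∫ v, Real.exp (-a * Φ v) ∂μ₀ with hN
  have hNpos : 0 < N := N_pos μ₀ Φ hΦnonneg ha hΦmeas
  rw [temper, integrable_withDensity_iff
    (((hΦmeas.const_mul (-a)).exp.const_mul _).ennreal_ofReal)
    (ae_of_all _ fun u => ENNReal.ofReal_lt_top)]
  refine (hΦint.const_mul N⁻¹).mono' ?_ ?_
  · exact (hΦmeas.mul (((hΦmeas.const_mul (-a)).exp.const_mul _).ennreal_ofReal).ennreal_toReal).aestronglyMeasurable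
  · refine ae_of_all _ fun u => ?_
    rw [ENNReal.toReal_ofReal (by positivity), Real.norm_eq_abs, abs_mul,
      abs_of_nonneg (hΦnonneg u), abs_of_nonneg (by positivity)]
    have h1 : Real.exp (-a * Φ u) ≤ 1 := exp_le_one_iff.mpr (by nlinarith [hΦnonneg u])
    have := hΦnonneg u
    calc Φ u * (N⁻¹ * Real.exp (-a * Φ u)) ≤ Φ u * (N⁻¹ * 1) := by
          apply mul_le_mul_of_nonneg_left _ this
          apply mul_le_mul_of_nonneg_left h1 (by positivity)
      _ = N⁻¹ * Φ u := by ring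
    
include hΦmeas hΦnonneg in
lemma klDivR_temper (hΦint : Integrable Φ μ₀) {a b : ℝ} (ha : 0 ≤ a) (hb : 0 ≤ b) :
    klDivR (temper μ₀ Φ a) (temper μ₀ Φ b)
      = (b - a) * ∫ u, Φ u ∂(temper μ₀ Φ a)
        - Real.log ((∫ v, Real.exp (-a * Φ v) ∂μ₀) / (∫ v, Real.exp (-b * Φ v) ∂μ₀)) := by
  set fa : H → ℝ := fun u => -a * Φ u with hfa
  set fb : H → ℝ := fun u => -b * Φ u with hfb
  have hinta : Integrable (fun x => Real.exp (fa x)) μ₀ := exp_integrable μ₀ Φ hΦnonneg ha hΦmeas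
  have hintb : Integrable (fun x => Real.exp (fb x)) μ₀ := exp_integrable μ₀ Φ hΦnonneg hb hΦmeas
  have hproba := temper_prob μ₀ Φ hΦmeas hΦnonneg ha
  have hprobb := temper_prob μ₀ Φ hΦmeas hΦnonneg hb
  have hsum : fb + (fa - fb) = fa := by
    funext u; show -b * Φ u + (-a * Φ u - -b * Φ u) = -a * Φ u; ring
  have h1 : temper μ₀ Φ a = (temper μ₀ Φ b).tilted (fa - fb) := by
    rw [temper_eq_tilted, temper_eq_tilted, tilted_tilted hintb, hsum]
  -- integrability of exp (fa - fb) w.r.t. temper b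
  have hexpg : Integrable (fun x => Real.exp ((fa - fb) x)) (temper μ₀ Φ b) := by
    rw [temper, integrable_withDensity_iff
      (((hΦmeas.const_mul (-b)).exp.const_mul _).ennreal_ofReal)
      (ae_of_all _ fun u => ENNReal.ofReal_lt_top)]
    have heq : (fun x => Real.exp ((fa - fb) x) *
        (ENNReal.ofReal ((∫ v, Real.exp (-b * Φ v) ∂μ₀)⁻¹ * Real.exp (-b * Φ x))).toReal)
        = fun x => (∫ v, Real.exp (-b * Φ v) ∂μ₀)⁻¹ * Real.exp (fa x) := by
      funext x
      rw [ENNReal.toReal_ofReal (by positivity)]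
      rw [show (fa - fb) x = fa x - fb x from rfl, Real.exp_sub,
        show Real.exp (-b * Φ x) = Real.exp (fb x) from rfl]
      have hne : Real.exp (fb x) ≠ 0 := (exp_pos _).ne'
      field_simp
    rw [heq]
    exact hinta.const_mul _
  have hlog : (fun x => Real.log (((temper μ₀ Φ a).rnDeriv (temper μ₀ Φ b) x).toReal))
      =ᵐ[temper μ₀ Φ a]
      fun x => (fa - fb) x - Real.log (∫ x, Real.exp ((fa - fb) x) ∂(temper μ₀ Φ b)) := by
    have hac : temper μ₀ Φ a ≪ temper μ₀ Φ b := by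
      rw [h1]; exact tilted_absolutelyContinuous _ _
    refine hac.ae_eq ?_
    have := log_rnDeriv_tilted_left_self (μ := temper μ₀ Φ b) (f := fa - fb) hexpg
    filter_upwards [this] with x hx
    rw [← h1] at hx
    exact hx
  have hZ : ∫ x, Real.exp ((fa - fb) x) ∂(temper μ₀ Φ b)
      = (∫ v, Real.exp (-a * Φ v) ∂μ₀) / (∫ v, Real.exp (-b * Φ v) ∂μ₀) := by
    rw [temper_eq_tilted, integral_exp_tilted, hsum]
  have hintPhi : Integrable Φ (temper μ₀ Φ a) :=
    temper_integrable_Phi μ₀ Φ hΦmeas hΦnonneg hΦint ha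
  have hgeq : (fa - fb) = fun x => (b - a) * Φ x := by
    funext u; show -a * Φ u - -b * Φ u = (b - a) * Φ u; ring
  rw [klDivR, integral_congr_ae hlog, hZ]
  rw [integral_sub (by rw [hgeq]; exact hintPhi.const_mul _) (integrable_const _)]
  rw [integral_const, probReal_univ, one_smul]
  rw [hgeq, integral_const_mul]

end Aux

/-- Let `H` be a real separable Hilbert space with its Borel σ-algebra,
`μ₀` a Borel probability measure on `H`, and `Φ : H → ℝ` measurable, nonnegative and
square-integrable w.r.t. `μ₀`.  For all `0 ≤ s < t`, the symmetrized Kullback–Leibler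
(Jeffreys) divergence between consecutive tempering measures admits the upper bound
`D_{KL,2}(μ_s, μ_t) ≤ (t − s)·⟨Φ⟩_s`. -/
theorem tempering_jeffreys_divergence_upper_bound
    {H : Type*} [NormedAddCommGroup H] [InnerProductSpace ℝ H] [CompleteSpace H]
    [TopologicalSpace.SeparableSpace H] [MeasurableSpace H] [BorelSpace H]
    (μ₀ : Measure H) [IsProbabilityMeasure μ₀]
    (Φ : H → ℝ) (hΦmeas : Measurable Φ) (hΦnonneg : ∀ u, 0 ≤ Φ u)
    (hΦsq : MemLp Φ 2 μ₀)
    (s t : ℝ) (hs : 0 ≤ s) (hst : s < t) :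
    klDiv2R (temper μ₀ Φ s) (temper μ₀ Φ t) ≤
      (t - s) * ∫ u, Φ u ∂(temper μ₀ Φ s) := by

  have hΦint : Integrable Φ μ₀ := hΦsq.integrable one_le_two
  have ht : (0:ℝ) ≤ t := hs.trans hst.le
  have h1 := klDivR_temper μ₀ Φ hΦmeas hΦnonneg hΦint ht hs
  have h2 := klDivR_temper μ₀ Φ hΦmeas hΦnonneg hΦint hs ht
  rw [klDiv2R, h1, h2]
  have hNs : 0 < ∫ v, Real.exp (-s * Φ v) ∂μ₀ := N_pos μ₀ Φ hΦnonneg hs hΦmeas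
  have hNt : 0 < ∫ v, Real.exp (-t * Φ v) ∂μ₀ := N_pos μ₀ Φ hΦnonneg ht hΦmeas
  rw [Real.log_div hNt.ne' hNs.ne', Real.log_div hNs.ne' hNt.ne']
  have hPt : 0 ≤ ∫ u, Φ u ∂(temper μ₀ Φ t) := integral_nonneg hΦnonneg
  nlinarith [mul_nonneg (sub_nonneg.mpr hst.le) hPt]
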